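/- Let R = ℂ[x_{ij} : 1 ≤ i,j ≤ n] and X = (x_{ij}) the generic n×n matrix. Define the Gulliksen–Negård complex B: 0 → R →^{δ₄} B₃ →^{δ₃} B₂ →^{δ₂} B₁ →^{δ₁} R, where B₁, B₃ are the modules of n×n matrices, B₂ is as in the previous context, δ₁(A) = tr(A·adj(X)), δ₂(A,B) = AX − XB, δ₃(A) = (XA, AX), δ₄(1) = adj(X). Then B is a complex: δ₁δ₂ = 0, δ₂δ₃ = 0, and δ₃δ₄ = 0. -/
import Mathlib


/-- The polynomial ring `ℂ[x_{ij} : 1 ≤ i,j ≤ n]` on the entries of a generic `n×n`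
matrix. -/
abbrev PolyRing (n : ℕ) : Type := MvPolynomial (Fin n × Fin n) ℂ

/-- The generic `n×n` matrix `X = (x_{ij})`. -/
noncomputable def genMatrix (n : ℕ) : Matrix (Fin n) (Fin n) (PolyRing n) :=
  Matrix.of fun i j => MvPolynomial.X (i, j)

/-!
STATEMENT 16.  The Gulliksen–Negård complex
`B : 0 → R →^{δ₄} B₃ →^{δ₃} B₂ →^{δ₂} B₁ →^{δ₁} R` with `B₁ = B₃ = Matₙ(R)`,
`B₂ = {(A,B) : tr A = tr B}/span{(I,I)}`, `δ₁(A) = tr(A·adj X)`, `δ₂(A,B) = AX − XB`,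
`δ₃(A) = (XA, AX)`, `δ₄(1) = adj X`, is a complex.  Concretely: `δ₃` lands in `B₂`
(`tr(XA) = tr(AX)`), `δ₂` is well defined on `B₂` (`δ₂(I,I) = 0`), and
`δ₁ ∘ δ₂ = 0` on `B₂`, `δ₂ ∘ δ₃ = 0`, and `δ₃ ∘ δ₄ = 0` in `B₂` (i.e.
`(X·adj X, adj X·X)` lies in `span{(I,I)}`).
-/
theorem stmt16 (n : ℕ) :
    -- δ₃ lands in B₂
    (∀ A : Matrix (Fin n) (Fin n) (PolyRing n),
      ((genMatrix n * A).trace = (A * genMatrix n).trace)) ∧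
    -- δ₂ is well defined on B₂ : δ₂(I,I) = 0
    ((1 : Matrix (Fin n) (Fin n) (PolyRing n)) * genMatrix n
        - genMatrix n * (1 : Matrix (Fin n) (Fin n) (PolyRing n)) = 0) ∧
    -- δ₁ ∘ δ₂ = 0 (on B₂, i.e. for pairs with equal traces)
    (∀ A B : Matrix (Fin n) (Fin n) (PolyRing n), A.trace = B.trace →
      ((A * genMatrix n - genMatrix n * B) * (genMatrix n).adjugate).trace = 0) ∧
    -- δ₂ ∘ δ₃ = 0
    (∀ A : Matrix (Fin n) (Fin n) (PolyRing n),
      (genMatrix n * A) * genMatrix n - genMatrix n * (A * genMatrix n) = 0) ∧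
    -- δ₃ ∘ δ₄ = 0 in B₂
    ((genMatrix n * (genMatrix n).adjugate, (genMatrix n).adjugate * genMatrix n) ∈
      Submodule.span (PolyRing n)
        {((1 : Matrix (Fin n) (Fin n) (PolyRing n)),
          (1 : Matrix (Fin n) (Fin n) (PolyRing n)))}) := by
  refine ⟨fun A => Matrix.trace_mul_comm _ _, by simp, ?_, ?_, ?_⟩
  · intro A B h
    rw [Matrix.sub_mul, Matrix.trace_sub, Matrix.mul_assoc, Matrix.mul_adjugate,
      Matrix.mul_assoc, Matrix.trace_mul_comm (genMatrix n) (B * (genMatrix n).adjugate),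
      Matrix.mul_assoc, Matrix.adjugate_mul]
    simp [Matrix.trace_smul, h]
  · intro A; rw [Matrix.mul_assoc, sub_self]
  · have : (genMatrix n * (genMatrix n).adjugate, (genMatrix n).adjugate * genMatrix n)
        = (genMatrix n).det • ((1 : Matrix (Fin n) (Fin n) (PolyRing n)),
          (1 : Matrix (Fin n) (Fin n) (PolyRing n))) := by
      simp [Matrix.mul_adjugate, Matrix.adjugate_mul, Prod.ext_iff]
    rw [this]
    exact Submodule.smul_mem _ _ (Submodule.subset_span rfl)
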